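/- Let b : ℝ → ℂ be a continuous function satisfying b(t) = conj(b(t)) · exp(-i ω t) for all t, where ω = 2π/T with T > 0, and suppose b is periodic with period T. Then there exists t₀ such that b(t₀) = 0. -/
import Mathlib


/-- A continuous `T`-periodic function `b : ℝ → ℂ` satisfying the glide-symmetry
constraint `b(t) = conj(b(t)) · exp(-iωt)` with `ω = 2π/T` must vanish somewhere. -/
theorem glide_constraint_periodic_vanishes
    (T ω : ℝ) (hT : 0 < T) (hω : ω = 2 * Real.pi / T)
    (b : ℝ → ℂ) (hb : Continuous b)
    (hconstraint : ∀ t : ℝ,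
      b t = (starRingEnd ℂ) (b t) * Complex.exp (-Complex.I * ω * t))
    (hper : ∀ t : ℝ, b (t + T) = b t) :
    ∃ t₀ : ℝ, b t₀ = 0 := by
  set f : ℝ → ℂ := fun t => b t * Complex.exp (Complex.I * ω * t / 2) with hf
  have hT' : (T : ℂ) ≠ 0 := Complex.ofReal_ne_zero.2 hT.ne'
  have hωT : (ω : ℂ) * T = 2 * Real.pi := by
    push_cast [hω]
    rw [div_mul_eq_mul_div, mul_div_assoc, div_self hT', mul_one]
  -- f is self-conjugate (real-valued)
  have hreal : ∀ t, (starRingEnd ℂ) (f t) = f t := by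
    intro t
    simp only [hf, map_mul, ← Complex.exp_conj, map_div₀, Complex.conj_I,
      Complex.conj_ofReal, map_ofNat]
    conv_rhs => rw [hconstraint t]
    conv_rhs => rw [mul_assoc, ← Complex.exp_add]
    ring_nf
  -- f(T) = -f(0)
  have hfT : f T = - f 0 := by
    have h0 : (0 : ℝ) + T = T := by ring
    simp only [hf]
    rw [← h0, hper 0, h0]
    have : Complex.I * ω * T / 2 = Real.pi * Complex.I := by
      rw [mul_assoc, hωT]; ring
    rw [this, Complex.exp_pi_mul_I]
    simp
  set g : ℝ → ℝ := fun t => (f t).re with hg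
  have hgc : Continuous g := (Complex.continuous_re.comp
    (hb.mul (Complex.continuous_exp.comp ((continuous_const.mul Complex.continuous_ofReal).div_const 2)))).congr (fun t => rfl)
  have hmem : (0 : ℝ) ∈ Set.uIcc (g 0) (g T) := by
    have : g T = - g 0 := by simp [hg, hfT]
    rw [this]
    rcases le_total 0 (g 0) with h | h
    · exact Set.mem_uIcc.2 (Or.inr ⟨by linarith, h⟩)
    · exact Set.mem_uIcc.2 (Or.inl ⟨h, by linarith⟩)
  obtain ⟨t₀, _, ht₀⟩ := intermediate_value_uIcc (hgc.continuousOn (s := Set.uIcc 0 T)) hmem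
  refine ⟨t₀, ?_⟩
  -- f t₀ = 0 since it's real with zero real part
  have hft : f t₀ = 0 := by
    have him : (f t₀).im = 0 := by
      have := hreal t₀
      have := congrArg Complex.im this
      simp [Complex.conj_im] at this
      linarith
    exact Complex.ext ht₀ him
  have hexp := Complex.exp_ne_zero (Complex.I * ω * t₀ / 2)
  have : b t₀ * Complex.exp (Complex.I * ω * t₀ / 2) = 0 := hft
  exact (mul_eq_zero.1 this).resolve_right hexp
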